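/- Let a, a' : ℕ → A be two sequences that coincide outside a set of upper Banach density zero, i.e., {n ∈ ℕ : a(n) ≠ a'(n)} has upper Banach density zero, and let x : ℕ → A be any sequence. Then x and a share arbitrarily long common factors if and only if x and a' share arbitrarily long common factors. -/

import Mathlib

/-- A set of natural numbers has upper Banach density zero. -/
def UBDZero (Z : Set ℕ) : Prop :=
  ∀ ε : ℝ, 0 < ε → ∃ l₀ : ℕ, ∀ m l : ℕ, l₀ ≤ l →
    (Nat.card (Z ∩ Set.Ico m (m + l) : Set ℕ) : ℝ) ≤ ε * l

/-- Two sequences share arbitrarily long common factors. -/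
def SharesArbLongFactors {A : Type*} (x y : ℕ → A) : Prop :=
  ∀ L : ℕ, ∃ m n : ℕ, ∀ i < L, x (m + i) = y (n + i)

open Classical in
lemma ubd_gap (Z : Set ℕ) (h : UBDZero Z) (L : ℕ) :
    ∃ l : ℕ, ∀ m : ℕ, ∃ n : ℕ, m ≤ n ∧ n + L ≤ m + l ∧ ∀ i, n ≤ i → i < n + L → i ∉ Z := by
  rcases Nat.eq_zero_or_pos L with rfl | hL
  · exact ⟨0, fun m => ⟨m, le_refl m, by omega, fun i h1 h2 => by omega⟩⟩
  obtain ⟨l₀, hl₀⟩ := h (1 / (2 * L)) (by positivity)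
  set k := l₀ + 1 with hk
  refine ⟨k * L, fun m => ?_⟩
  by_contra hcon
  push_neg at hcon
  have hpt : ∀ j : ℕ, ∃ p, j < k → p ∈ Z ∧ m + j * L ≤ p ∧ p < m + j * L + L := by
    intro j
    by_cases hj : j < k
    · obtain ⟨i, h1, h2, h3⟩ := hcon (m + j * L) (by omega) (by nlinarith)
      exact ⟨i, fun _ => ⟨h3, h1, h2⟩⟩
    · exact ⟨0, fun hj' => absurd hj' hj⟩
  choose p hp using hpt
  set T : Finset ℕ := (Finset.Ico m (m + k * L)).filter (· ∈ Z) with hT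
  have hsetT : Z ∩ Set.Ico m (m + k * L) = ↑T := by
    ext i; simp only [hT, Finset.coe_filter, Finset.mem_Ico, Set.mem_inter_iff, Set.mem_Ico,
      Set.mem_setOf_eq]; tauto
  have hcard : k ≤ T.card := by
    have := Finset.card_le_card_of_injOn (s := Finset.range k) (t := T) p (fun j hj => by
      obtain ⟨h1, h2, h3⟩ := hp j (Finset.mem_range.mp hj)
      rw [hT, Finset.mem_coe, Finset.mem_filter, Finset.mem_Ico]
      have : m + j * L + L ≤ m + k * L := by
        have : j + 1 ≤ k := Finset.mem_range.mp hj
        nlinarith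
      exact ⟨⟨by omega, by omega⟩, h1⟩)
      (fun j hj j' hj' heq => by
        simp only [Finset.coe_range, Set.mem_Iio] at hj hj'
        obtain ⟨_, h2, h3⟩ := hp j hj
        obtain ⟨_, h2', h3'⟩ := hp j' hj'
        have e1 : j * L < j' * L + L := by omega
        have e2 : j' * L < j * L + L := by omega
        have : j < j' + 1 := by
          have : j * L < (j' + 1) * L := by nlinarith
          exact Nat.lt_of_mul_lt_mul_right this
        have : j' < j + 1 := by
          have : j' * L < (j + 1) * L := by nlinarith
          exact Nat.lt_of_mul_lt_mul_right this
        omega)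
    simpa using this
  have hbound := hl₀ m (k * L) (by nlinarith)
  rw [hsetT] at hbound
  rw [Nat.card_coe_set_eq, Set.ncard_coe_finset] at hbound
  have hk2 : (k : ℝ) ≤ (T.card : ℝ) := by exact_mod_cast hcard
  have hLpos : (0:ℝ) < (L:ℝ) := by exact_mod_cast hL
  have : (1 : ℝ) / (2 * L) * ((k : ℕ) * L : ℕ) = (k : ℝ) / 2 := by
    push_cast; field_simp
  rw [this] at hbound
  have hk1 : (1:ℝ) ≤ (k:ℝ) := by exact_mod_cast Nat.one_le_iff_ne_zero.mpr (by omega)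
  linarith

lemma shares_mono {A : Type*} (a a' x : ℕ → A)
    (h : UBDZero {n | a n ≠ a' n}) (hx : SharesArbLongFactors x a) :
    SharesArbLongFactors x a' := by
  intro L
  obtain ⟨l, hl⟩ := ubd_gap _ h L
  obtain ⟨m, n, hmn⟩ := hx l
  obtain ⟨n', hn1, hn2, hn3⟩ := hl n
  refine ⟨m + (n' - n), n', fun i hi => ?_⟩
  have e1 : m + (n' - n) + i = m + ((n' - n) + i) := by omega
  have e2 : n + ((n' - n) + i) = n' + i := by omega
  have h3 := hn3 (n' + i) (by omega) (by omega)
  simp only [Set.mem_setOf_eq, not_not] at h3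
  rw [e1, hmn ((n' - n) + i) (by omega), e2, h3]

theorem shared_factors_invariant {A : Type*} (a a' x : ℕ → A)
    (h : UBDZero {n | a n ≠ a' n}) :
    SharesArbLongFactors x a ↔ SharesArbLongFactors x a' := by
  have h' : UBDZero {n | a' n ≠ a n} := by
    convert h using 2
    ext n; exact ne_comm
  exact ⟨shares_mono a a' x h, shares_mono a' a x h'⟩
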